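/- arXiv:2111.07425 — 7 statements merged into one kernel-verified Lean document; each statement's English description precedes it below -/
import Mathlib

section
/- If G is a connected bipartite graph and S is a general position set of G with |S| ≥ 3, then S is an independent set. -/
open SimpleGraph

/-- The interval `I_G[u,v]`: vertices lying on some shortest `u,v`-path. -/
def gpInterval {V : Type*} (G : SimpleGraph V) (u v : V) : Set V :=
  {x | ∃ p : G.Walk u v, p.length = G.dist u v ∧ x ∈ p.support}

/-- A general position set: no three (distinct) vertices of `S` lie on a common
shortest path. -/
def IsGPSet {V : Type*} (G : SimpleGraph V) (S : Set V) : Prop :=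
  ∀ u ∈ S, ∀ v ∈ S, ∀ w ∈ S, u ≠ v → v ≠ w → u ≠ w → v ∉ gpInterval G u w

/-- A maximal general position set. -/
def IsMaximalGPSet {V : Type*} (G : SimpleGraph V) (S : Set V) : Prop :=
  IsGPSet G S ∧ ∀ T : Set V, IsGPSet G T → S ⊆ T → T = S

/-- The general position number of a graph. -/
noncomputable def gpNumber {V : Type*} (G : SimpleGraph V) : ℕ :=
  sSup {n : ℕ | ∃ S : Finset V, IsGPSet G ↑S ∧ S.card = n}

/-- The lexicographic product of two simple graphs. -/
def lexProd {α β : Type*} (G : SimpleGraph α) (H : SimpleGraph β) :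
    SimpleGraph (α × β) where
  Adj x y := G.Adj x.1 y.1 ∨ (x.1 = y.1 ∧ H.Adj x.2 y.2)
  symm := by
    constructor
    intro x y h
    rcases h with h | ⟨h1, h2⟩
    · exact Or.inl h.symm
    · exact Or.inr ⟨h1.symm, h2.symm⟩
  loopless := by
    constructor
    intro x h
    rcases h with h | ⟨_, h2⟩
    · exact G.irrefl h
    · exact H.irrefl h2


private lemma walk_color {V : Type*} {G : SimpleGraph V} (C : G.Coloring (ZMod 2))
    {x y : V} (p : G.Walk x y) : C y = C x + (p.length : ZMod 2) := by
  induction p with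
  | nil => simp
  | @cons a b c h q ih =>
    have hne : C a ≠ C b := C.valid h
    have key : ∀ s t : ZMod 2, s ≠ t → t = s + 1 := by decide
    have hb : C b = C a + 1 := key _ _ hne
    rw [ih, hb, Walk.length_cons]
    push_cast
    ring

/-- in a connected bipartite graph, a general position set of size
at least 3 is independent. -/
theorem stmt1 {V : Type*} (G : SimpleGraph V) (hG : G.Connected)
    (hbip : G.Colorable 2) (S : Set V) (hS : IsGPSet G S)
    (hcard : 3 ≤ S.ncard) :
    ∀ u ∈ S, ∀ v ∈ S, ¬ G.Adj u v := by

  intro u hu v hv hadj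
  have huv : u ≠ v := G.ne_of_adj hadj
  -- find a third vertex
  have hw : ∃ w ∈ S, w ≠ u ∧ w ≠ v := by
    by_contra h
    push_neg at h
    have hsub : S ⊆ {u, v} := by
      intro x hx
      by_cases hxu : x = u
      · simp [hxu]
      · simp [h x hx hxu]
    have : S.ncard ≤ ({u, v} : Set V).ncard :=
      Set.ncard_le_ncard hsub (Set.toFinite _)
    have h2 : ({u, v} : Set V).ncard ≤ 2 := by
      have := Set.ncard_insert_le u ({v} : Set V)
      simpa using this
    omega
  obtain ⟨w, hwS, hwu, hwv⟩ := hw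
  obtain C := hbip.some
  have C2 : G.Coloring (ZMod 2) := C
  -- parity facts
  obtain ⟨p, hp⟩ := (hG.exists_walk_length_eq_dist u w)
  obtain ⟨q, hq⟩ := (hG.exists_walk_length_eq_dist v w)
  have hpc : C2 w = C2 u + (G.dist u w : ZMod 2) := by rw [← hp]; exact walk_color C2 p
  have hqc : C2 w = C2 v + (G.dist v w : ZMod 2) := by rw [← hq]; exact walk_color C2 q
  have key : ∀ s t : ZMod 2, s ≠ t → t = s + 1 := by decide
  have hcv : C2 v = C2 u + 1 := key _ _ (C2.valid hadj)
  have hparodd : (G.dist u w : ZMod 2) ≠ (G.dist v w : ZMod 2) := by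
    intro h
    rw [hpc, hcv, h] at hqc
    exact one_ne_zero (by linear_combination -hqc)
  have hdne : G.dist u w ≠ G.dist v w := fun h => hparodd (by rw [h])
  have h1 : G.dist u w ≤ G.dist v w + 1 := by
    have := SimpleGraph.dist_le (Walk.cons hadj q)
    simpa [hq, Nat.add_comm] using this
  have h2 : G.dist v w ≤ G.dist u w + 1 := by
    have := SimpleGraph.dist_le (Walk.cons hadj.symm p)
    simpa [hp, Nat.add_comm] using this
  rcases Nat.lt_or_ge (G.dist v w) (G.dist u w) with hlt | hge
  · -- d(u,w) = d(v,w)+1, so v on shortest u-w path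
    have heq : G.dist u w = G.dist v w + 1 := by omega
    exact hS u hu v hv w hwS huv hwv.symm hwu.symm
      ⟨Walk.cons hadj q, by simp [hq, heq], by simp⟩
  · have heq : G.dist v w = G.dist u w + 1 := by omega
    exact hS v hv u hu w hwS huv.symm hwu.symm hwv.symm
      ⟨Walk.cons hadj.symm p, by simp [hp, heq], by simp⟩
end

section
/- The only connected graphs G with gp(G) = 2 are paths and the 4-cycle C₄. -/
open SimpleGraph

lemma mem_gpInterval_iff {V : Type*} {G : SimpleGraph V} (hc : G.Connected) {u w x : V} :
    x ∈ gpInterval G u w ↔ G.dist u x + G.dist x w = G.dist u w := by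
  classical
  constructor
  · rintro ⟨p, hlen, hx⟩
    have hsplit := congrArg Walk.length (p.take_spec hx)
    rw [Walk.length_append] at hsplit
    have h1 := dist_le (p.takeUntil x hx)
    have h2 := dist_le (p.dropUntil x hx)
    have h3 := hc.dist_triangle (u := u) (v := x) (w := w)
    omega
  · intro h
    obtain ⟨p, hp⟩ := hc.exists_walk_length_eq_dist u x
    obtain ⟨q, hq⟩ := hc.exists_walk_length_eq_dist x w
    refine ⟨p.append q, ?_, ?_⟩
    · rw [Walk.length_append, hp, hq, h]
    · rw [Walk.mem_support_append_iff]
      exact Or.inl p.end_mem_support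

lemma dist_getVert_le {V : Type*} {G : SimpleGraph V} (hc : G.Connected) {a b : V} (p : G.Walk a b) :
    ∀ i : ℕ, G.dist a (p.getVert i) ≤ i := by
  intro i; induction i with
  | zero => simp
  | succ i ih =>
    by_cases h : i < p.length
    · have hadj := p.adj_getVert_succ h
      have h1 := hc.dist_triangle (u := a) (v := p.getVert i) (w := p.getVert (i+1))
      have h2 : G.dist (p.getVert i) (p.getVert (i+1)) = 1 := dist_eq_one_iff_adj.mpr hadj
      omega
    · rw [p.getVert_of_length_le (by omega)]
      rw [p.getVert_of_length_le (not_lt.1 h)] at ih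
      omega

lemma geodesic_getVert {V : Type*} {G : SimpleGraph V} (hc : G.Connected) {a b : V}
    (p : G.Walk a b) (hp : p.length = G.dist a b) {i : ℕ} (hi : i ≤ p.length) :
    G.dist a (p.getVert i) = i ∧ G.dist (p.getVert i) b = p.length - i := by
  have h1 := dist_getVert_le hc p i
  have h2 : G.dist (p.getVert i) b ≤ p.length - i := by
    have h3 := dist_getVert_le hc p.reverse (p.length - i)
    rw [Walk.getVert_reverse, Nat.sub_sub_self hi] at h3
    rw [dist_comm]
    simpa using h3
  have h4 := hc.dist_triangle (u := a) (v := p.getVert i) (w := b)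
  constructor <;> omega

lemma iso_c4 {V : Type*} {G : SimpleGraph V} {r x s y : V}
    (hV : ∀ w : V, w = r ∨ w = x ∨ w = y ∨ w = s)
    (hrx : r ≠ x) (hry : r ≠ y) (hrs : r ≠ s) (hxy : x ≠ y) (hxs : x ≠ s) (hys : y ≠ s)
    (haRX : G.Adj r x) (haRY : G.Adj r y) (haXS : G.Adj x s) (haYS : G.Adj y s)
    (hnRS : ¬ G.Adj r s) (hnXY : ¬ G.Adj x y) : Nonempty (G ≃g cycleGraph 4) := by
  have hgs : Function.Surjective (![r, x, s, y] : Fin 4 → V) := by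
    intro v
    rcases hV v with rfl | rfl | rfl | rfl
    · exact ⟨0, rfl⟩
    · exact ⟨1, rfl⟩
    · exact ⟨3, rfl⟩
    · exact ⟨2, rfl⟩
  have hgi : Function.Injective (![r, x, s, y] : Fin 4 → V) := by
    intro i j hij
    fin_cases i <;> fin_cases j <;>
      first
        | rfl
        | exact absurd hij hrx
        | exact absurd hij hry
        | exact absurd hij hrs
        | exact absurd hij hxy
        | exact absurd hij hxs
        | exact absurd hij hys
        | exact absurd hij hrx.symm
        | exact absurd hij hry.symm
        | exact absurd hij hrs.symm
        | exact absurd hij hxy.symm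
        | exact absurd hij hxs.symm
        | exact absurd hij hys.symm
  refine ⟨(SimpleGraph.Iso.symm ⟨Equiv.ofBijective _ ⟨hgi, hgs⟩, ?_⟩ : G ≃g cycleGraph 4)⟩
  intro a b
  fin_cases a <;> fin_cases b
  · exact iff_of_false (G.irrefl) (by decide)
  · exact iff_of_true haRX (by decide)
  · exact iff_of_false hnRS (by decide)
  · exact iff_of_true haRY (by decide)
  · exact iff_of_true haRX.symm (by decide)
  · exact iff_of_false (G.irrefl) (by decide)
  · exact iff_of_true haXS (by decide)
  · exact iff_of_false hnXY (by decide)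
  · exact iff_of_false (fun h => hnRS h.symm) (by decide)
  · exact iff_of_true haXS.symm (by decide)
  · exact iff_of_false (G.irrefl) (by decide)
  · exact iff_of_true haYS.symm (by decide)
  · exact iff_of_true haRY.symm (by decide)
  · exact iff_of_false (fun h => hnXY h.symm) (by decide)
  · exact iff_of_true haYS (by decide)
  · exact iff_of_false (G.irrefl) (by decide)

/-- the only connected graphs with general position number 2 are
paths and the 4-cycle. -/
theorem stmt2 {V : Type*} [Fintype V] (G : SimpleGraph V) (hG : G.Connected)
    (h2 : gpNumber G = 2) :
    (∃ n : ℕ, Nonempty (G ≃g pathGraph n)) ∨ Nonempty (G ≃g cycleGraph 4) := by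
  classical
  obtain ⟨r0⟩ := hG.nonempty
  obtain ⟨⟨r, s⟩, -, hmaxm⟩ := Finset.exists_max_image (Finset.univ ×ˢ Finset.univ)
      (fun p : V × V => G.dist p.1 p.2) ⟨(r0, r0), by simp⟩
  have hmax : ∀ a b : V, G.dist a b ≤ G.dist r s := fun a b => hmaxm (a, b) (by simp)
  have hbdd : BddAbove {n : ℕ | ∃ S : Finset V, IsGPSet G ↑S ∧ S.card = n} := by
    refine ⟨Fintype.card V, ?_⟩
    rintro n ⟨S, -, rfl⟩
    exact S.card_le_univ.trans (le_of_eq Finset.card_univ)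
  have no3 : ∀ S : Finset V, S.card = 3 → ¬ IsGPSet G ↑S := by
    intro S h3 hgp
    have h : (3 : ℕ) ≤ gpNumber G := le_csSup hbdd ⟨S, hgp, h3⟩
    omega
  have hd0 : ∀ a b : V, G.dist a b = 0 → a = b := fun a b h => (hG.dist_eq_zero_iff).1 h
  have ne_of_d : ∀ a b : V, G.dist a b ≠ 0 → a ≠ b := by
    intro a b h hab; rw [hab, dist_self] at h; exact h rfl
  have hsym : ∀ a b c : V, G.dist a b + G.dist b c = G.dist a c →
      G.dist c b + G.dist b a = G.dist c a := by
    intro a b c h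
    have e1 : G.dist c b = G.dist b c := dist_comm
    have e2 : G.dist b a = G.dist a b := dist_comm
    have e3 : G.dist c a = G.dist a c := dist_comm
    omega
  have Hbet : ∀ u v w : V, u ≠ v → v ≠ w → u ≠ w →
      (G.dist u v + G.dist v w = G.dist u w) ∨ (G.dist v u + G.dist u w = G.dist v w) ∨
      (G.dist u w + G.dist w v = G.dist u v) := by
    intro u v w huv hvw huw
    have hcard : ({u, v, w} : Finset V).card = 3 := by
      rw [Finset.card_insert_of_notMem (by simp [huv, huw]),
        Finset.card_insert_of_notMem (by simp [hvw]), Finset.card_singleton]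
    have hn := no3 _ hcard
    unfold IsGPSet at hn
    push_neg at hn
    obtain ⟨a, ha, b, hb, c, hc', hab, hbc, hac, hmem⟩ := hn
    rw [mem_gpInterval_iff hG] at hmem
    simp only [Finset.coe_insert, Set.mem_insert_iff, Finset.coe_singleton,
      Set.mem_singleton_iff] at ha hb hc'
    rcases hb with rfl | rfl | rfl
    · refine Or.inr (Or.inl ?_)
      rcases ha with rfl | rfl | rfl
      · exact absurd rfl hab
      · rcases hc' with rfl | rfl | rfl
        · exact absurd rfl hbc
        · exact absurd rfl hac
        · exact hmem
      · rcases hc' with rfl | rfl | rfl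
        · exact absurd rfl hbc
        · exact hsym _ _ _ hmem
        · exact absurd rfl hac
    · refine Or.inl ?_
      rcases ha with rfl | rfl | rfl
      · rcases hc' with rfl | rfl | rfl
        · exact absurd rfl hac
        · exact absurd rfl hbc
        · exact hmem
      · exact absurd rfl hab
      · rcases hc' with rfl | rfl | rfl
        · exact hsym _ _ _ hmem
        · exact absurd rfl hbc
        · exact absurd rfl hac
    · refine Or.inr (Or.inr ?_)
      rcases ha with rfl | rfl | rfl
      · rcases hc' with rfl | rfl | rfl
        · exact absurd rfl hac
        · exact hmem
        · exact absurd rfl hbc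
      · rcases hc' with rfl | rfl | rfl
        · exact hsym _ _ _ hmem
        · exact absurd rfl hac
        · exact absurd rfl hbc
      · exact absurd rfl hab
  have key : ∀ x y : V, x ≠ y → G.dist r x = G.dist r y →
      G.dist r x = 1 ∧ G.dist r s = 2 ∧ G.dist x y = 2 ∧ G.dist x s = 1 ∧ G.dist y s = 1 := by
    intro x y hxy hkxy
    have hk0 : G.dist r x ≠ 0 := by
      intro h0
      have hx := hd0 r x h0
      have hy := hd0 r y (by omega)
      exact hxy (hx.symm.trans hy)
    have hrx : r ≠ x := ne_of_d r x hk0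
    have hry : r ≠ y := ne_of_d r y (by omega)
    have hxy2 : G.dist x y = 2 * G.dist r x := by
      rcases Hbet r x y hrx hxy hry with h | h | h
      · exact absurd (hd0 x y (by omega)) hxy
      · have e : G.dist x r = G.dist r x := dist_comm
        omega
      · exact absurd (hd0 y x (by omega)) (Ne.symm hxy)
    have hdxyD : G.dist x y ≤ G.dist r s := hmax x y
    have hxs : x ≠ s := by
      intro h; subst h; omega
    have hys : y ≠ s := by
      intro h; subst h; omega
    have hrs : r ≠ s := by
      intro h
      have e : G.dist r s = 0 := by rw [← h]; exact dist_self
      omega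
    have hxs' : G.dist r x + G.dist x s = G.dist r s := by
      rcases Hbet r x s hrx hxs hrs with h | h | h
      · exact h
      · have e : G.dist x r = G.dist r x := dist_comm
        have := hmax x s
        omega
      · omega
    have hys' : G.dist r y + G.dist y s = G.dist r s := by
      rcases Hbet r y s hry hys hrs with h | h | h
      · exact h
      · have e : G.dist y r = G.dist r y := dist_comm
        have := hmax y s
        omega
      · omega
    have hDk : G.dist r s = 2 * G.dist r x ∧ G.dist x s = G.dist r x ∧
        G.dist y s = G.dist r x := by
      rcases Hbet x s y hxs (Ne.symm hys) hxy with h | h | h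
      · have e : G.dist s y = G.dist y s := dist_comm
        omega
      · have e : G.dist s x = G.dist x s := dist_comm
        have e2 : G.dist s y = G.dist y s := dist_comm
        omega
      · omega
    obtain ⟨hD2k, hxsk, hysk⟩ := hDk
    by_cases hk1 : G.dist r x = 1
    · exact ⟨hk1, by omega, by omega, by omega, by omega⟩
    exfalso
    have hk2 : 2 ≤ G.dist r x := by omega
    obtain ⟨p, hp⟩ := hG.exists_walk_length_eq_dist r x
    have hpl : p.length = G.dist r x := hp
    have hgv := geodesic_getVert hG p hp (i := p.length - 1) (by omega)
    obtain ⟨hgv1, hgv2⟩ := hgv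
    have hadj : G.Adj (p.getVert (p.length - 1)) x := by
      have h := p.adj_getVert_succ (i := p.length - 1) (by omega)
      rw [show p.length - 1 + 1 = p.length by omega, p.getVert_length] at h
      exact h
    set z := p.getVert (p.length - 1) with hzdef
    have hrz : G.dist r z = G.dist r x - 1 := by omega
    have hzx1 : G.dist z x = 1 := dist_eq_one_iff_adj.mpr hadj
    have hzy : G.dist z y = 2 * G.dist r x - 1 := by
      have t1 := hG.dist_triangle (u := z) (v := r) (w := y)
      have t2 := hG.dist_triangle (u := x) (v := z) (w := y)
      have e1 : G.dist z r = G.dist r z := dist_comm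
      have e2 : G.dist x z = G.dist z x := dist_comm
      omega
    have hzs_ne : z ≠ s := by
      intro h; rw [h] at hrz; omega
    have hzy_ne : z ≠ y := by
      intro h; rw [h] at hrz; omega
    have hzs : G.dist z s = G.dist r x - 1 := by
      rcases Hbet z y s hzy_ne hys hzs_ne with h | h | h
      · have := hmax z s
        omega
      · have e : G.dist y z = G.dist z y := dist_comm
        omega
      · have e : G.dist s y = G.dist y s := dist_comm
        omega
    have hrz_ne : r ≠ z := ne_of_d r z (by omega)
    rcases Hbet r z s hrz_ne hzs_ne hrs with h | h | h
    · omega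
    · have e : G.dist z r = G.dist r z := dist_comm
      omega
    · have e : G.dist s z = G.dist z s := dist_comm
      omega
  by_cases hE : ∃ x y : V, x ≠ y ∧ G.dist r x = G.dist r y
  · -- C4 case
    obtain ⟨x, y, hxy, hk⟩ := hE
    obtain ⟨hk1, hD2, hxy2, hxs1, hys1⟩ := key x y hxy hk
    have hky : G.dist r y = 1 := by omega
    have hrx : r ≠ x := ne_of_d r x (by omega)
    have hry : r ≠ y := ne_of_d r y (by omega)
    have hrs : r ≠ s := ne_of_d r s (by omega)
    have hxs : x ≠ s := ne_of_d x s (by omega)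
    have hys : y ≠ s := ne_of_d y s (by omega)
    have hV : ∀ w : V, w = r ∨ w = x ∨ w = y ∨ w = s := by
      intro w
      by_contra hw
      push_neg at hw
      obtain ⟨hwr, hwx, hwy, hws⟩ := hw
      have hb : G.dist r w ≤ G.dist r s := hmax r w
      have h3 : G.dist r w = 0 ∨ G.dist r w = 1 ∨ G.dist r w = 2 := by omega
      rcases h3 with h0 | h1 | h2'
      · exact hwr (hd0 r w h0).symm
      · obtain ⟨-, -, hwx2, -, -⟩ := key w x hwx (by omega)
        obtain ⟨-, -, hwy2, -, -⟩ := key w y hwy (by omega)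
        rcases Hbet w x y hwx hxy hwy with h | h | h
        · omega
        · have e : G.dist x w = G.dist w x := dist_comm
          omega
        · have e : G.dist y x = G.dist x y := dist_comm
          omega
      · obtain ⟨hc1, -, -, -, -⟩ := key w s hws (by omega)
        omega
    have haRX : G.Adj r x := dist_eq_one_iff_adj.mp hk1
    have haRY : G.Adj r y := dist_eq_one_iff_adj.mp hky
    have haXS : G.Adj x s := dist_eq_one_iff_adj.mp hxs1
    have haYS : G.Adj y s := dist_eq_one_iff_adj.mp hys1
    have hnRS : ¬ G.Adj r s := fun h => by rw [← dist_eq_one_iff_adj] at h; omega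
    have hnXY : ¬ G.Adj x y := fun h => by rw [← dist_eq_one_iff_adj] at h; omega
    exact Or.inr (iso_c4 hV hrx hry hrs hxy hxs hys haRX haRY haXS haYS hnRS hnXY)
  · -- path case
    push_neg at hE
    have hinj : ∀ x y : V, G.dist r x = G.dist r y → x = y := by
      intro x y h
      by_contra hxy
      exact hE x y hxy h
    left
    have hlt : ∀ v : V, G.dist r v < G.dist r s + 1 := fun v => Nat.lt_succ_of_le (hmax r v)
    refine ⟨G.dist r s + 1, ?_⟩
    let f : V → Fin (G.dist r s + 1) := fun v => ⟨G.dist r v, hlt v⟩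
    have hfi : Function.Injective f := by
      intro a b hab
      exact hinj a b (congrArg Fin.val hab)
    have hfs : Function.Surjective f := by
      intro i
      obtain ⟨p, hp⟩ := hG.exists_walk_length_eq_dist r s
      have hi : (i : ℕ) ≤ p.length := by rw [hp]; omega
      exact ⟨p.getVert i, Fin.ext (geodesic_getVert hG p hp hi).1⟩
    refine ⟨⟨Equiv.ofBijective f ⟨hfi, hfs⟩, ?_⟩⟩
    intro a b
    show (pathGraph _).Adj (f a) (f b) ↔ G.Adj a b
    rw [pathGraph_adj]
    show G.dist r a + 1 = G.dist r b ∨ G.dist r b + 1 = G.dist r a ↔ G.Adj a b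
    have hpen : ∀ a b : V, G.dist r b = G.dist r a + 1 → G.Adj a b := by
      intro a b hab
      obtain ⟨q, hq⟩ := hG.exists_walk_length_eq_dist r b
      have hql : 1 ≤ q.length := by omega
      obtain ⟨hq1, -⟩ := geodesic_getVert hG q hq (i := q.length - 1) (by omega)
      have hadj : G.Adj (q.getVert (q.length - 1)) b := by
        have h := q.adj_getVert_succ (i := q.length - 1) (by omega)
        rw [show q.length - 1 + 1 = q.length by omega, q.getVert_length] at h
        exact h
      have he : q.getVert (q.length - 1) = a := hinj _ _ (by rw [hq1]; omega)
      rwa [he] at hadj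
    constructor
    · rintro (h | h)
      · exact hpen a b h.symm
      · exact (hpen b a h.symm).symm
    · intro h
      have h1 : G.dist a b = 1 := dist_eq_one_iff_adj.mpr h
      have hne : a ≠ b := h.ne
      have t1 := hG.dist_triangle (u := r) (v := a) (w := b)
      have t2 := hG.dist_triangle (u := r) (v := b) (w := a)
      have e : G.dist b a = G.dist a b := dist_comm
      have hne2 : G.dist r a ≠ G.dist r b := fun hh => hne (hinj a b hh)
      omega
end

section
/- Let G and H be connected graphs and let R be a general position set of G □ H. If u = (g,h) ∈ R, then either the H-layer through g intersects R only in u, or the G-layer through h intersects R only in u. -/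
open SimpleGraph

section aux
variable {α β : Type*} {G : SimpleGraph α} {H : SimpleGraph β}

lemma boxProd_walk_len [DecidableEq α] [DecidableEq β]
    [DecidableRel G.Adj] [DecidableRel H.Adj] {x y : α × β}
    (w : (G □ H).Walk x y) :
    w.ofBoxProdLeft.length + w.ofBoxProdRight.length = w.length := by
  induction w with
  | nil => rfl
  | @cons u v _ h p ih =>
    obtain ⟨a, b⟩ := u
    obtain ⟨c, d⟩ := v
    rcases h with ⟨hG1, hd⟩ | ⟨hH1, hd⟩
    · cases hd
      have h2 : ¬(H.Adj b b ∧ a = c) := fun hc => H.irrefl hc.1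
      simp only [Walk.ofBoxProdLeft, Walk.ofBoxProdRight, Or.by_cases, Walk.length_cons]
      rw [dif_pos (⟨hG1, trivial⟩ : G.Adj a c ∧ True), dif_neg h2]
      simp only [Walk.length_cons]
      change _ = p.length + 1
      omega
    · cases hd
      have h1 : ¬(G.Adj a a ∧ b = d) := fun hc => G.irrefl hc.1
      simp only [Walk.ofBoxProdLeft, Walk.ofBoxProdRight, Or.by_cases, Walk.length_cons]
      rw [dif_neg h1, dif_pos (⟨hH1, trivial⟩ : H.Adj b d ∧ True)]
      simp only [Walk.length_cons]
      change _ = p.length + 1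
      omega

lemma boxProd_dist (hG : G.Connected) (hH : H.Connected) (x y : α × β) :
    (G □ H).dist x y = G.dist x.1 y.1 + H.dist x.2 y.2 := by
  classical
  apply le_antisymm
  · obtain ⟨p, hp⟩ := hG.exists_walk_length_eq_dist x.1 y.1
    obtain ⟨q, hq⟩ := hH.exists_walk_length_eq_dist x.2 y.2
    have := SimpleGraph.dist_le
      ((p.boxProdLeft H x.2).append (q.boxProdRight G y.1) :
        (G □ H).Walk (x.1, x.2) (y.1, y.2))
    have h4 : (p.boxProdLeft H x.2).length = p.length := Walk.length_map _ _
    have h5 : (q.boxProdRight G y.1).length = q.length := Walk.length_map _ _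
    simpa [Walk.length_append, h4, h5, hp, hq] using this
  · obtain ⟨w, hw⟩ := ((hG.boxProd hH) x y).exists_walk_length_eq_dist
    calc G.dist x.1 y.1 + H.dist x.2 y.2
        ≤ w.ofBoxProdLeft.length + w.ofBoxProdRight.length :=
          Nat.add_le_add (SimpleGraph.dist_le _) (SimpleGraph.dist_le _)
      _ = w.length := boxProd_walk_len w
      _ = _ := hw

end aux

/-- a vertex of a general position set of a Cartesian product is
alone in its `H`-layer or alone in its `G`-layer. -/
theorem stmt7 {α β : Type*} (G : SimpleGraph α) (H : SimpleGraph β)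
    (hG : G.Connected) (hH : H.Connected) (R : Set (α × β))
    (hR : IsGPSet (G □ H) R) (g : α) (h : β) (hu : (g, h) ∈ R) :
    (∀ x ∈ R, x.1 = g → x = (g, h)) ∨ (∀ x ∈ R, x.2 = h → x = (g, h)) := by
  by_contra hcon
  push_neg at hcon
  obtain ⟨⟨x, hx, hx1, hxne⟩, ⟨y, hy, hy2, hyne⟩⟩ := hcon
  obtain ⟨x1, x2⟩ := x
  obtain ⟨y1, y2⟩ := y
  simp only at hx1 hy2
  subst hx1; subst hy2
  have hx2 : x2 ≠ y2 := fun hh => hxne (by rw [hh])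
  have hy1 : y1 ≠ x1 := fun hh => hyne (by rw [hh])
  obtain ⟨p, hp⟩ := hH.exists_walk_length_eq_dist x2 y2
  obtain ⟨q, hq⟩ := hG.exists_walk_length_eq_dist x1 y1
  set w : (G □ H).Walk (x1, x2) (y1, y2) :=
    (p.boxProdRight G x1).append (q.boxProdLeft H y2) with hw
  have hlen : w.length = (G □ H).dist (x1, x2) (y1, y2) := by
    rw [boxProd_dist hG hH]
    have h4 : (p.boxProdRight G x1).length = p.length := Walk.length_map _ _
    have h5 : (q.boxProdLeft H y2).length = q.length := Walk.length_map _ _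
    simp only [hw, Walk.length_append, h4, h5, hp, hq]
    omega
  have hmem : (x1, y2) ∈ gpInterval (G □ H) (x1, x2) (y1, y2) :=
    ⟨w, hlen, (Walk.mem_support_append_iff _ _).mpr
      (Or.inr (Walk.start_mem_support _))⟩
  exact hR (x1, x2) hx (x1, y2) hu (y1, y2) hy
    (fun hh => hx2 (congrArg Prod.snd hh))
    (fun hh => hy1 (congrArg Prod.fst hh).symm)
    (fun hh => hy1 (congrArg Prod.fst hh).symm) hmem
end

section
/- For vertices (g,h) and (g',h') of the lexicographic product G ∘ H with G and H connected: if g ≠ g' then d_{G∘H}((g,h),(g',h')) = d_G(g,g'); if g = g' and g has a neighbor in G then d_{G∘H}((g,h),(g',h')) = min{d_H(h,h'), 2}. -/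
open SimpleGraph

/-- Project a walk in the lexicographic product to a (not longer) walk in `G`. -/
lemma lex_proj_walk {α β : Type*} {G : SimpleGraph α} {H : SimpleGraph β} :
    ∀ {u v : α × β} (p : (lexProd G H).Walk u v),
      ∃ q : G.Walk u.1 v.1, q.length ≤ p.length := by
  intro u v p
  induction p with
  | nil => exact ⟨.nil, le_refl _⟩
  | @cons x y z a p ih =>
    obtain ⟨q, hq⟩ := ih
    rcases a with ha | ⟨heq, _⟩
    · exact ⟨.cons ha q, Nat.succ_le_succ hq⟩
    · exact ⟨q.copy heq.symm rfl, by simp only [Walk.length_copy]; exact Nat.le_succ_of_le hq⟩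

/-- Lift a positive-length walk in `G` to a walk in the lexicographic product
with arbitrary second coordinates at the endpoints. -/
lemma lex_lift_walk {α β : Type*} {G : SimpleGraph α} {H : SimpleGraph β}
    (h h' : β) : ∀ {g g' : α} (p : G.Walk g g'), 0 < p.length →
      ∃ q : (lexProd G H).Walk (g, h) (g', h'), q.length = p.length := by
  intro g g' p
  induction p with
  | nil => simp
  | @cons x y z a p ih =>
    intro _
    cases p with
    | nil => exact ⟨.cons (Or.inl a) .nil, rfl⟩
    | cons b p' =>
      obtain ⟨q, hq⟩ := ih (by simp)
      exact ⟨.cons (Or.inl a) q, by show q.length + 1 = _; rw [hq]; rfl⟩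

/-- Lift a walk in `H` to a walk in the fiber over `g`. -/
lemma lex_lift_walkH {α β : Type*} {G : SimpleGraph α} {H : SimpleGraph β}
    (g : α) : ∀ {h h' : β} (p : H.Walk h h'),
      ∃ q : (lexProd G H).Walk (g, h) (g, h'), q.length = p.length := by
  intro h h' p
  induction p with
  | nil => exact ⟨.nil, rfl⟩
  | @cons x y z a p ih =>
    obtain ⟨q, hq⟩ := ih
    exact ⟨.cons (show (lexProd G H).Adj (g, x) (g, y) from Or.inr ⟨rfl, a⟩) q, by simp [hq]⟩

lemma lex_reachable {α β : Type*} {G : SimpleGraph α} {H : SimpleGraph β}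
    (hG : G.Connected) (hH : H.Connected) (g g' : α) (h h' : β) :
    (lexProd G H).Reachable (g, h) (g', h') := by
  obtain ⟨pH⟩ := hH (h) (h')
  obtain ⟨qH, _⟩ := lex_lift_walkH (G := G) g' pH
  by_cases hgg : g = g'
  · subst hgg; exact ⟨qH⟩
  · obtain ⟨pG, hpG⟩ := (hG g g').exists_walk_length_eq_dist
    obtain ⟨qG, _⟩ := lex_lift_walk (H := H) h h' pG
      (by rw [hpG]; exact hG.pos_dist_of_ne hgg)
    exact ⟨qG⟩

/-- distances in the lexicographic product. -/
theorem stmt12 {α β : Type*} (G : SimpleGraph α) (H : SimpleGraph β)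
    (hG : G.Connected) (hH : H.Connected) (g g' : α) (h h' : β) :
    (g ≠ g' → (lexProd G H).dist (g, h) (g', h') = G.dist g g') ∧
    (g = g' → (∃ w, G.Adj g w) →
      (lexProd G H).dist (g, h) (g', h') = min (H.dist h h') 2) := by
  constructor
  · intro hne
    apply le_antisymm
    · obtain ⟨pG, hpG⟩ := (hG g g').exists_walk_length_eq_dist
      obtain ⟨qG, hqG⟩ := lex_lift_walk (H := H) h h' pG
        (by rw [hpG]; exact hG.pos_dist_of_ne hne)
      calc (lexProd G H).dist (g, h) (g', h') ≤ qG.length := dist_le _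
        _ = G.dist g g' := by rw [hqG, hpG]
    · obtain ⟨p, hp⟩ := (lex_reachable hG hH g g' h h').exists_walk_length_eq_dist
      obtain ⟨q, hq⟩ := lex_proj_walk p
      calc G.dist g g' ≤ q.length := dist_le _
        _ ≤ p.length := hq
        _ = _ := hp
  · rintro rfl ⟨w, hw⟩
    by_cases hhh : h = h'
    · subst hhh; simp [dist_self]
    · by_cases hadj : H.Adj h h'
      · rw [(dist_eq_one_iff_adj).2 hadj]
        exact (dist_eq_one_iff_adj).2 (Or.inr ⟨rfl, hadj⟩)
      · have hH2 : 2 ≤ H.dist h h' := by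
          have h0 : H.dist h h' ≠ 0 := by
            rw [dist_ne_zero_iff_ne_and_reachable]
            exact ⟨hhh, hH h h'⟩
          have h1 : H.dist h h' ≠ 1 := fun hc => hadj (dist_eq_one_iff_adj.1 hc)
          omega
        rw [min_eq_right hH2]
        apply le_antisymm
        · exact le_trans (dist_le (Walk.cons (v := (w, h')) (show (lexProd G H).Adj (g, h) (w, h') from Or.inl hw)
            (Walk.cons (show (lexProd G H).Adj (w, h') (g, h') from Or.inl hw.symm) Walk.nil))) (le_of_eq rfl)
        · have h0 : (lexProd G H).dist (g, h) (g, h') ≠ 0 := by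
            rw [dist_ne_zero_iff_ne_and_reachable]
            exact ⟨fun hc => hhh (congrArg Prod.snd hc), lex_reachable hG hH g g h h'⟩
          have h1 : (lexProd G H).dist (g, h) (g, h') ≠ 1 := by
            intro hc
            rcases dist_eq_one_iff_adj.1 hc with hc' | ⟨_, hc'⟩
            · exact G.irrefl hc'
            · exact hadj hc'
          omega
end

section
/- Let G be a connected graph and n ≥ 1. A set S ⊆ V(G ∘ Kₙ) is a maximal general position set of G ∘ Kₙ if and only if S = S_G × V(Kₙ) for some maximal general position set S_G of G. -/
open SimpleGraph

section Aux

variable {α : Type*} {G : SimpleGraph α} {n : ℕ}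

open scoped Classical

/-- lift a walk with constant second coordinate -/
def liftConst : ∀ {x y : α}, G.Walk x y → (h : Fin n) →
    (lexProd G (⊤ : SimpleGraph (Fin n))).Walk (x, h) (y, h)
  | _, _, .nil, _ => .nil
  | _, _, .cons e q, h => .cons (Or.inl e) (liftConst q h)

@[simp] lemma length_liftConst : ∀ {x y : α} (p : G.Walk x y) (h : Fin n),
    (liftConst p h).length = p.length
  | _, _, .nil, _ => rfl
  | _, _, .cons e q, h => congrArg (· + 1) (length_liftConst q h)

lemma liftSeg {x y : α} (q : G.Walk x y) (hq : ¬ q.Nil) (h h' : Fin n) :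
    ∃ w : (lexProd G (⊤ : SimpleGraph (Fin n))).Walk (x, h) (y, h'),
      w.length = q.length ∧ (x, h) ∈ w.support ∧ (y, h') ∈ w.support := by
  cases q with
  | nil => exact absurd SimpleGraph.Walk.Nil.nil hq
  | cons e r =>
    refine ⟨.cons (Or.inl e) (liftConst r h'), congrArg (· + 1) (length_liftConst r h'), ?_, ?_⟩
    · exact SimpleGraph.Walk.start_mem_support _
    · exact SimpleGraph.Walk.end_mem_support _

noncomputable def projWalk : ∀ {u v : α × Fin n},
    (lexProd G (⊤ : SimpleGraph (Fin n))).Walk u v → G.Walk u.1 v.1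
  | _, _, .nil => .nil
  | u, v, .cons (v := m) e q =>
      if h : G.Adj u.1 m.1 then .cons h (projWalk q)
      else (projWalk q).copy (by rcases e with h' | h'; exact absurd h' h; exact h'.1.symm) rfl

lemma projWalk_length_le : ∀ {u v : α × Fin n}
    (p : (lexProd G (⊤ : SimpleGraph (Fin n))).Walk u v),
    (projWalk p).length ≤ p.length
  | _, _, .nil => le_refl _
  | u, v, .cons (v := m) e q => by
    by_cases h : G.Adj u.1 m.1
    · simpa [projWalk, h] using projWalk_length_le q
    · simp only [projWalk, h, dif_neg, not_false_iff, SimpleGraph.Walk.length_copy,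
        SimpleGraph.Walk.length_cons]
      exact (projWalk_length_le q).trans (Nat.le_succ _)

lemma projWalk_support_sublist : ∀ {u v : α × Fin n}
    (p : (lexProd G (⊤ : SimpleGraph (Fin n))).Walk u v),
    List.Sublist (projWalk p).support (p.support.map Prod.fst)
  | _, _, .nil => by simp [projWalk]
  | u, v, .cons (v := m) e q => by
    by_cases h : G.Adj u.1 m.1
    · simpa [projWalk, h] using (projWalk_support_sublist q).cons₂ u.1
    · simp only [projWalk, h, dif_neg, not_false_iff, SimpleGraph.Walk.support_copy,
        SimpleGraph.Walk.support_cons, List.map_cons]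
      exact (projWalk_support_sublist q).cons _


lemma liftWalk_of_ne {a c : α} (hac : a ≠ c) (p : G.Walk a c) (h h' : Fin n) :
    ∃ w : (lexProd G (⊤ : SimpleGraph (Fin n))).Walk (a, h) (c, h'),
      w.length = p.length := by
  obtain ⟨w, hw, -, -⟩ := liftSeg p (SimpleGraph.Walk.not_nil_of_ne hac) h h'
  exact ⟨w, hw⟩

lemma lexDist_of_ne (hG : G.Connected) {a c : α} (hac : a ≠ c) (h h' : Fin n) :
    (lexProd G (⊤ : SimpleGraph (Fin n))).dist (a, h) (c, h') = G.dist a c := by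
  obtain ⟨p, hp⟩ := (hG a c).exists_walk_length_eq_dist
  obtain ⟨w, hw⟩ := liftWalk_of_ne hac p h h'
  have hle : (lexProd G (⊤ : SimpleGraph (Fin n))).dist (a, h) (c, h') ≤ G.dist a c := by
    rw [← hp, ← hw]; exact SimpleGraph.dist_le w
  have hreach : (lexProd G (⊤ : SimpleGraph (Fin n))).Reachable (a, h) (c, h') := ⟨w⟩
  obtain ⟨P, hP⟩ := hreach.exists_walk_length_eq_dist
  have hge : G.dist a c ≤ (lexProd G (⊤ : SimpleGraph (Fin n))).dist (a, h) (c, h') := by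
    calc G.dist a c ≤ (projWalk P).length := SimpleGraph.dist_le _
      _ ≤ P.length := projWalk_length_le P
      _ = _ := hP
  omega

/-- Projection of interval membership in the lexicographic product. -/
lemma interval_proj (hG : G.Connected) {a c : α} (hac : a ≠ c) {h h' : Fin n}
    {v : α × Fin n}
    (hv : v ∈ gpInterval (lexProd G (⊤ : SimpleGraph (Fin n))) (a, h) (c, h')) :
    v.1 ∈ gpInterval G a c ∧ (v.1 = a → v = (a, h)) ∧ (v.1 = c → v = (c, h')) := by
  obtain ⟨P, hPlen, hvP⟩ := hv
  rw [lexDist_of_ne hG hac] at hPlen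
  set Q := projWalk P with hQ
  have hQle : Q.length ≤ P.length := projWalk_length_le P
  have hQge : G.dist a c ≤ Q.length := SimpleGraph.dist_le _
  have hQdist : Q.length = G.dist a c := by omega
  have hQlen : Q.length = P.length := by omega
  have hsub : List.Sublist Q.support (P.support.map Prod.fst) := projWalk_support_sublist P
  have hlens : Q.support.length = (P.support.map Prod.fst).length := by
    rw [List.length_map, SimpleGraph.Walk.length_support, SimpleGraph.Walk.length_support, hQlen]
  have hseq : Q.support = P.support.map Prod.fst := hsub.eq_of_length hlens
  have hpath : Q.IsPath := Q.isPath_of_length_eq_dist hQdist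
  have hnodup : (P.support.map Prod.fst).Nodup := hseq ▸ hpath.support_nodup
  have hmem : v.1 ∈ Q.support := by
    rw [hseq]; exact List.mem_map_of_mem (f := Prod.fst) hvP
  refine ⟨⟨Q, hQdist, hmem⟩, ?_, ?_⟩
  · intro hva
    exact List.inj_on_of_nodup_map hnodup hvP P.start_mem_support hva
  · intro hvc
    exact List.inj_on_of_nodup_map hnodup hvP P.end_mem_support hvc

/-- Interval within a fiber. -/
lemma interval_fiber {a : α} {h h' : Fin n} (hhh : h ≠ h') {v : α × Fin n}
    (hv : v ∈ gpInterval (lexProd G (⊤ : SimpleGraph (Fin n))) (a, h) (a, h')) :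
    v = (a, h) ∨ v = (a, h') := by
  obtain ⟨P, hPlen, hvP⟩ := hv
  have hadj : (lexProd G (⊤ : SimpleGraph (Fin n))).Adj (a, h) (a, h') :=
    Or.inr ⟨rfl, by simpa using hhh⟩
  have hdist : (lexProd G (⊤ : SimpleGraph (Fin n))).dist (a, h) (a, h') = 1 :=
    SimpleGraph.dist_eq_one_iff_adj.mpr hadj
  rw [hdist] at hPlen
  cases P with
  | nil => simp at hPlen
  | cons e q =>
    have hq : q.length = 0 := by simpa using hPlen
    have hqnil : q.Nil := SimpleGraph.Walk.nil_iff_length_eq.mpr hq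
    rw [SimpleGraph.Walk.support_cons] at hvP
    rcases List.mem_cons.mp hvP with h1 | h2
    · exact Or.inl h1
    · right
      cases q with
      | nil => simpa using h2
      | cons e' q' => exact absurd hqnil SimpleGraph.Walk.not_nil_cons

/-- Lifting interval membership. -/
lemma interval_lift (hG : G.Connected) {a b c : α} (hac : a ≠ c) (hba : b ≠ a) (hbc : b ≠ c)
    (hb : b ∈ gpInterval G a c) (h₁ h₂ h₃ : Fin n) :
    (b, h₂) ∈ gpInterval (lexProd G (⊤ : SimpleGraph (Fin n))) (a, h₁) (c, h₃) := by
  obtain ⟨p, hplen, hbp⟩ := hb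
  obtain ⟨w₁, hw₁, -, hend₁⟩ := liftSeg (p.takeUntil b hbp)
    (SimpleGraph.Walk.not_nil_of_ne (Ne.symm hba)) h₁ h₂
  obtain ⟨w₂, hw₂, -, -⟩ := liftSeg (p.dropUntil b hbp)
    (SimpleGraph.Walk.not_nil_of_ne hbc) h₂ h₃
  refine ⟨w₁.append w₂, ?_, ?_⟩
  · have := congrArg SimpleGraph.Walk.length (p.take_spec hbp)
    rw [SimpleGraph.Walk.length_append] at this
    rw [SimpleGraph.Walk.length_append, hw₁, hw₂, this, hplen, lexDist_of_ne hG hac]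
  · rw [SimpleGraph.Walk.mem_support_append_iff]
    exact Or.inl hend₁


/-- projection of a GP set is a GP set. -/
lemma gp_proj (hG : G.Connected) {S : Set (α × Fin n)}
    (hS : IsGPSet (lexProd G (⊤ : SimpleGraph (Fin n))) S) :
    IsGPSet G (Prod.fst '' S) := by
  rintro a ⟨⟨a, h₁⟩, ha, rfl⟩ b ⟨⟨b, h₂⟩, hb, rfl⟩ c ⟨⟨c, h₃⟩, hc, rfl⟩ hab hbc hac hmem
  exact hS _ ha _ hb _ hc (by simp [hab]) (by simp [hbc]) (by simp [hac])
    (interval_lift hG hac (Ne.symm hab) hbc hmem h₁ h₂ h₃)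

/-- products are GP sets. -/
lemma gp_prod (hG : G.Connected) {T : Set α} (hT : IsGPSet G T) :
    IsGPSet (lexProd G (⊤ : SimpleGraph (Fin n))) (T ×ˢ (Set.univ : Set (Fin n))) := by
  rintro ⟨a, h₁⟩ ⟨ha, -⟩ ⟨b, h₂⟩ ⟨hb, -⟩ ⟨c, h₃⟩ ⟨hc, -⟩ hab hbc hac hmem
  by_cases h : a = c
  · subst h
    have : h₁ ≠ h₃ := fun hh => hac (by rw [hh])
    rcases interval_fiber this hmem with h | h
    · exact hab h.symm
    · exact hbc h
  · obtain ⟨hb1, hb2, hb3⟩ := interval_proj hG h hmem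
    by_cases hba : b = a
    · exact hab (hb2 hba).symm
    by_cases hbc' : b = c
    · exact hbc (hb3 hbc')
    exact hT a ha b hb c hc (Ne.symm hba) hbc' h hb1

lemma proj_prod_univ {T : Set α} (hn : 1 ≤ n) :
    Prod.fst '' (T ×ˢ (Set.univ : Set (Fin n))) = T := by
  ext a
  constructor
  · rintro ⟨⟨a, h⟩, ⟨ha, -⟩, rfl⟩; exact ha
  · intro ha; exact ⟨(a, ⟨0, hn⟩), ⟨ha, trivial⟩, rfl⟩

end Aux


/-- maximal general position sets of `G ∘ Kₙ` are exactly the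
sets `S_G × V(Kₙ)` for maximal general position sets `S_G` of `G`. -/
theorem stmt14 {α : Type*} (G : SimpleGraph α) (hG : G.Connected) (n : ℕ)
    (hn : 1 ≤ n) (S : Set (α × Fin n)) :
    IsMaximalGPSet (lexProd G (⊤ : SimpleGraph (Fin n))) S ↔
      ∃ SG : Set α, IsMaximalGPSet G SG ∧ S = SG ×ˢ (Set.univ : Set (Fin n)) := by
  constructor
  · rintro ⟨hgp, hmax⟩
    have hπ : IsGPSet G (Prod.fst '' S) := gp_proj hG hgp
    have hprod : IsGPSet (lexProd G (⊤ : SimpleGraph (Fin n)))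
        ((Prod.fst '' S) ×ˢ (Set.univ : Set (Fin n))) := gp_prod hG hπ
    have hsub : S ⊆ (Prod.fst '' S) ×ˢ (Set.univ : Set (Fin n)) := by
      rintro ⟨a, h⟩ ha
      exact ⟨⟨(a, h), ha, rfl⟩, trivial⟩
    have hSeq : (Prod.fst '' S) ×ˢ (Set.univ : Set (Fin n)) = S := hmax _ hprod hsub
    refine ⟨Prod.fst '' S, ⟨hπ, ?_⟩, hSeq.symm⟩
    intro T hT hTsub
    have hprodT : IsGPSet (lexProd G (⊤ : SimpleGraph (Fin n)))
        (T ×ˢ (Set.univ : Set (Fin n))) := gp_prod hG hT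
    have hsub2 : S ⊆ T ×ˢ (Set.univ : Set (Fin n)) := by
      intro x hx
      obtain ⟨hx1, hx2⟩ := hSeq ▸ hx
      exact ⟨hTsub hx1, trivial⟩
    have := hmax _ hprodT hsub2
    calc T = Prod.fst '' (T ×ˢ (Set.univ : Set (Fin n))) := (proj_prod_univ hn).symm
      _ = Prod.fst '' S := by rw [this]
  · rintro ⟨SG, ⟨hSGgp, hSGmax⟩, rfl⟩
    refine ⟨gp_prod hG hSGgp, ?_⟩
    intro T hT hTsub
    have hπT : IsGPSet G (Prod.fst '' T) := gp_proj hG hT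
    have hsub : SG ⊆ Prod.fst '' T := by
      rw [← proj_prod_univ (T := SG) hn]
      exact Set.image_mono hTsub
    have hEq : Prod.fst '' T = SG := hSGmax _ hπT hsub
    apply Set.Subset.antisymm _ hTsub
    rintro ⟨a, h⟩ ha
    exact ⟨hEq ▸ ⟨(a, h), ha, rfl⟩, trivial⟩
end

section
/- In a connected bipartite graph of order at least 2, every pair of adjacent vertices forms a maximal general position set. -/
open SimpleGraph

private lemma zmod2_ne {x y : ZMod 2} (h : x ≠ y) : y = x + 1 := by
  revert h; revert x y; decide

private lemma walk_parity {V : Type*} {G : SimpleGraph V} (c : G.Coloring (ZMod 2))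
    {a b : V} (p : G.Walk a b) : c b = c a + p.length := by
  induction p with
  | nil => simp
  | cons h q ih =>
    rw [ih, zmod2_ne (c.valid h)]
    simp only [SimpleGraph.Walk.length_cons]
    push_cast
    ring

/-- in a connected bipartite graph of order at least 2, every
pair of adjacent vertices is a maximal general position set. -/
theorem stmt15 {V : Type*} [Fintype V] (G : SimpleGraph V) (hG : G.Connected)
    (hbip : G.Colorable 2) (hcard : 2 ≤ Fintype.card V) (u v : V)
    (huv : G.Adj u v) :
    IsMaximalGPSet G {u, v} := by
  have hne : u ≠ v := G.ne_of_adj huv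
  constructor
  · intro a ha b hb c hc hab hbc hac
    rcases ha with rfl | rfl <;> rcases hb with rfl | rfl <;> rcases hc with rfl | rfl <;>
      simp_all
  · intro T hT hsub
    obtain ⟨col⟩ := hbip
    let c : G.Coloring (ZMod 2) := col
    apply Set.eq_of_subset_of_subset _ hsub
    intro w hw
    by_contra hwuv
    simp only [Set.mem_insert_iff, Set.mem_singleton_iff, not_or] at hwuv
    obtain ⟨hwu, hwv⟩ := hwuv
    have hu : u ∈ T := hsub (by simp)
    have hv : v ∈ T := hsub (by simp)
    -- distances
    have hduv : G.dist u v = 1 := SimpleGraph.dist_eq_one_iff_adj.mpr huv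
    obtain ⟨pu, hpu⟩ := (hG.preconnected w u).exists_walk_length_eq_dist
    obtain ⟨pv, hpv⟩ := (hG.preconnected w v).exists_walk_length_eq_dist
    have hcu := walk_parity c pu
    have hcv := walk_parity c pv
    have hcne : c u ≠ c v := c.valid huv
    have hparity : G.dist w u ≠ G.dist w v := by
      intro h
      apply hcne
      rw [hcu, hcv, hpu, hpv, h]
    have h1 : G.dist w u ≤ G.dist w v + 1 := by
      calc G.dist w u ≤ G.dist w v + G.dist v u := hG.dist_triangle
        _ = G.dist w v + 1 := by rw [SimpleGraph.dist_comm (u := v) (v := u), hduv]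
    have h2 : G.dist w v ≤ G.dist w u + 1 := by
      calc G.dist w v ≤ G.dist w u + G.dist u v := hG.dist_triangle
        _ = G.dist w u + 1 := by rw [hduv]
    rcases lt_or_gt_of_ne hparity with hlt | hlt
    · -- dist w u + 1 = dist w v : u on shortest w-v path
      have heq : G.dist w v = G.dist w u + 1 := le_antisymm h2 hlt
      refine hT w hw u hu v hv hwu hne hwv ⟨pu.concat huv, ?_, ?_⟩
      · rw [SimpleGraph.Walk.length_concat, hpu, heq]
      · simp [SimpleGraph.Walk.concat_eq_append]
    · -- v on shortest w-u path
      have heq : G.dist w u = G.dist w v + 1 := le_antisymm h1 hlt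
      refine hT w hw v hv u hu hwv (Ne.symm hne) hwu ⟨pv.concat huv.symm, ?_, ?_⟩
      · rw [SimpleGraph.Walk.length_concat, hpv, heq]
      · simp [SimpleGraph.Walk.concat_eq_append]
end

section
/- In the Cartesian product Kₙ □ Kₘ (n, m ≥ 2), a set R of vertices is a general position set if and only if no two distinct vertices of R share a first coordinate while a third vertex of R shares the second coordinate with one of them; equivalently, for any three distinct vertices of R, either no two share a coordinate, or two share a coordinate i and the third differs from both in both coordinates. Concretely: three distinct vertices x, y, z of Kₙ □ Kₘ lie on a common shortest path if and only if two of them, say x and z, satisfy d(x,z) = 2 and the third y shares one coordinate with x and the other coordinate with z. -/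
open SimpleGraph

section Aux

variable {n m : ℕ}

lemma adjK {u v : Fin n × Fin m} :
    ((⊤ : SimpleGraph (Fin n)) □ (⊤ : SimpleGraph (Fin m))).Adj u v ↔
      ((u.1 ≠ v.1 ∧ u.2 = v.2) ∨ (u.2 ≠ v.2 ∧ u.1 = v.1)) := by
  constructor
  · rintro (⟨h, h2⟩ | ⟨h, h2⟩)
    · exact Or.inl ⟨h.ne, h2⟩
    · exact Or.inr ⟨h.ne, h2⟩
  · rintro (⟨h, h2⟩ | ⟨h, h2⟩)
    · exact Or.inl ⟨h, h2⟩
    · exact Or.inr ⟨h, h2⟩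

lemma distK_le_two (u v : Fin n × Fin m) :
    ((⊤ : SimpleGraph (Fin n)) □ (⊤ : SimpleGraph (Fin m))).dist u v ≤ 2 := by
  by_cases huv : u = v
  · simp [huv, dist_self]
  by_cases h1 : u.1 = v.1
  · have h2 : u.2 ≠ v.2 := fun h2 => huv (Prod.ext h1 h2)
    have hadj := adjK.mpr (Or.inr ⟨h2, h1⟩)
    calc _ ≤ hadj.toWalk.length := dist_le _
      _ ≤ 2 := by simp
  by_cases h2 : u.2 = v.2
  · have hadj := adjK.mpr (Or.inl ⟨h1, h2⟩)
    calc _ ≤ hadj.toWalk.length := dist_le _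
      _ ≤ 2 := by simp
  · have ha : ((⊤ : SimpleGraph (Fin n)) □ (⊤ : SimpleGraph (Fin m))).Adj u (u.1, v.2) :=
      adjK.mpr (Or.inr ⟨h2, rfl⟩)
    have hb : ((⊤ : SimpleGraph (Fin n)) □ (⊤ : SimpleGraph (Fin m))).Adj (u.1, v.2) v :=
      adjK.mpr (Or.inl ⟨h1, rfl⟩)
    calc _ ≤ (Walk.cons ha (Walk.cons hb Walk.nil)).length := dist_le _
      _ ≤ 2 := by simp

lemma keyK {a b c : Fin n × Fin m} (hab : a ≠ b) (hbc : b ≠ c) (hac : a ≠ c) :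
    b ∈ gpInterval ((⊤ : SimpleGraph (Fin n)) □ (⊤ : SimpleGraph (Fin m))) a c ↔
      (((⊤ : SimpleGraph (Fin n)) □ (⊤ : SimpleGraph (Fin m))).dist a c = 2 ∧
        ((b.1 = a.1 ∧ b.2 = c.2) ∨ (b.2 = a.2 ∧ b.1 = c.1))) := by
  set G := ((⊤ : SimpleGraph (Fin n)) □ (⊤ : SimpleGraph (Fin m))) with hG
  constructor
  · rintro ⟨p, hp, hbp⟩
    rw [Walk.mem_support_iff_exists_append] at hbp
    obtain ⟨q, r, rfl⟩ := hbp
    have hlen : q.length + r.length = G.dist a c := by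
      rw [← hp, Walk.length_append]
    have h1 : 1 ≤ G.dist a b := q.reachable.pos_dist_of_ne hab
    have h2 : 1 ≤ G.dist b c := r.reachable.pos_dist_of_ne hbc
    have h3 : G.dist a b ≤ q.length := dist_le q
    have h4 : G.dist b c ≤ r.length := dist_le r
    have h5 : G.dist a c ≤ 2 := distK_le_two a c
    have hd2 : G.dist a c = 2 := by omega
    have hdab : G.dist a b = 1 := by omega
    have hdbc : G.dist b c = 1 := by omega
    have hADab := adjK.mp (dist_eq_one_iff_adj.mp hdab)
    have hADbc := adjK.mp (dist_eq_one_iff_adj.mp hdbc)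
    have hnadj : ¬ G.Adj a c := fun h => by
      have := dist_eq_one_iff_adj.mpr h; omega
    rw [adjK] at hnadj
    push_neg at hnadj
    have hc1 : a.1 ≠ c.1 := by
      intro h
      rcases hnadj with ⟨k1, k2⟩
      have : a.2 ≠ c.2 := fun h2 => hac (Prod.ext h h2)
      exact (k2 this).elim h
    have hc2 : a.2 ≠ c.2 := fun h => (hnadj.1 hc1) h
    refine ⟨hd2, ?_⟩
    rcases hADab with ⟨k1, k2⟩ | ⟨k1, k2⟩
    · -- a.1 ≠ b.1, a.2 = b.2
      rcases hADbc with ⟨l1, l2⟩ | ⟨l1, l2⟩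
      · exact absurd (k2.trans l2) hc2
      · exact Or.inr ⟨k2.symm, l2⟩
    · rcases hADbc with ⟨l1, l2⟩ | ⟨l1, l2⟩
      · exact Or.inl ⟨k2.symm, l2⟩
      · exact absurd (k2.trans l2) hc1
  · rintro ⟨hd2, hcase⟩
    have hnac : a ≠ c := by rintro rfl; simp [dist_self] at hd2
    have hnadj : ¬ G.Adj a c := fun h => by
      have := dist_eq_one_iff_adj.mpr h; omega
    rw [adjK] at hnadj
    push_neg at hnadj
    have hc1 : a.1 ≠ c.1 := by
      intro h
      rcases hnadj with ⟨k1, k2⟩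
      have : a.2 ≠ c.2 := fun h2 => hnac (Prod.ext h h2)
      exact (k2 this).elim h
    have hc2 : a.2 ≠ c.2 := fun h => (hnadj.1 hc1) h
    rcases hcase with ⟨e1, e2⟩ | ⟨e1, e2⟩
    · have h1 : G.Adj a b := adjK.mpr (Or.inr ⟨fun h => hc2 (h.trans e2), e1.symm⟩)
      have h2 : G.Adj b c := adjK.mpr (Or.inl ⟨e1 ▸ hc1, e2⟩)
      refine ⟨Walk.cons h1 (Walk.cons h2 Walk.nil), ?_, ?_⟩
      · simp [hd2]
      · simp
    · have h1 : G.Adj a b := adjK.mpr (Or.inl ⟨fun h => hc1 (h.trans e2), e1.symm⟩)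
      have h2 : G.Adj b c := adjK.mpr (Or.inr ⟨e1 ▸ hc2, e2⟩)
      refine ⟨Walk.cons h1 (Walk.cons h2 Walk.nil), ?_, ?_⟩
      · simp [hd2]
      · simp

end Aux

/-- three distinct vertices of `Kₙ □ Kₘ` lie on a common shortest
path iff two of them are at distance 2 and the third shares one coordinate with
each of them. -/
theorem stmt17 (n m : ℕ) (hn : 2 ≤ n) (hm : 2 ≤ m)
    (x y z : Fin n × Fin m) (hxy : x ≠ y) (hyz : y ≠ z) (hxz : x ≠ z) :
    (∃ a b c : Fin n × Fin m, [a, b, c].Perm [x, y, z] ∧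
        b ∈ gpInterval ((⊤ : SimpleGraph (Fin n)) □ (⊤ : SimpleGraph (Fin m))) a c) ↔
    (∃ a b c : Fin n × Fin m, [a, b, c].Perm [x, y, z] ∧
        ((⊤ : SimpleGraph (Fin n)) □ (⊤ : SimpleGraph (Fin m))).dist a c = 2 ∧
        ((b.1 = a.1 ∧ b.2 = c.2) ∨ (b.2 = a.2 ∧ b.1 = c.1))) := by
  have hnd : ([x, y, z] : List (Fin n × Fin m)).Nodup := by
    simp [hxy, hyz, hxz]
  constructor
  · rintro ⟨a, b, c, hperm, hmem⟩
    have hnd' : ([a, b, c] : List (Fin n × Fin m)).Nodup := hperm.nodup_iff.mpr hnd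
    simp only [List.nodup_cons, List.mem_cons, List.not_mem_nil] at hnd'
    obtain ⟨h1, h2, _⟩ := hnd'
    push_neg at h1 h2
    exact ⟨a, b, c, hperm, (keyK h1.1 h2.1 h1.2.1).mp hmem⟩
  · rintro ⟨a, b, c, hperm, hcond⟩
    have hnd' : ([a, b, c] : List (Fin n × Fin m)).Nodup := hperm.nodup_iff.mpr hnd
    simp only [List.nodup_cons, List.mem_cons, List.not_mem_nil] at hnd'
    obtain ⟨h1, h2, _⟩ := hnd'
    push_neg at h1 h2
    exact ⟨a, b, c, hperm, (keyK h1.1 h2.1 h1.2.1).mpr hcond⟩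
end
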